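/- Let P be a nonempty impartial game each of whose options is misère-indistinguishable from some Nim-heap, say the options of P are misère-indistinguishable from nim a₁, nim a₂, …, and suppose that at least one of the numbers aᵢ is equal to 0 or 1. Then P is misère-indistinguishable from nim m, where m = mex{a₁, a₂, …} is the least natural number not occurring among the aᵢ. -/

import Mathlib

/-- An impartial game: a position is given by the list of its options
(the positions reachable in one move); both players have the same moves. -/
inductive Game : Type
  | node : List Game → Game

namespace Game

/-- The options of a position. -/
def options : Game → List Game
  | node l => l

/-- Disjunctive sum of two games: a move is made in exactly one component. -/
def add : Game → Game → Game
  | node l, node r =>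
      node ((l.attach.map fun x => add x.1 (node r)) ++
            (r.attach.map fun y => add (node l) y.1))
termination_by g h => sizeOf g + sizeOf h
decreasing_by
  · have := List.sizeOf_lt_of_mem x.2; simp_wf; (try simp only [Game.node.sizeOf_spec] at *); omega
  · have := List.sizeOf_lt_of_mem y.2; simp_wf; (try simp only [Game.node.sizeOf_spec] at *); omega

/-- Misère win (for the player to move): the game has no options,
or some option is a misère loss. -/
def MisereWin : Game → Prop
  | node l => l = [] ∨ ∃ x : {a // a ∈ l}, ¬ MisereWin x.1
decreasing_by
  simp_wf; have := List.sizeOf_lt_of_mem x.2; omega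

/-- Misère indistinguishability: adding any game `T` yields the same misère outcome. -/
def Indist (G H : Game) : Prop :=
  ∀ T : Game, MisereWin (add G T) ↔ MisereWin (add H T)

/-- The Nim-heap of size `n`, whose options are `nim 0, …, nim (n-1)`. -/
def nim : ℕ → Game
  | 0 => node []
  | n + 1 => node ((nim n).options ++ [nim n])

/-- Normal-play win (for the player to move): some option is a normal-play loss.
A player unable to move loses. -/
def NormalWin : Game → Prop
  | node l => ∃ x : {a // a ∈ l}, ¬ NormalWin x.1
decreasing_by
  simp_wf; have := List.sizeOf_lt_of_mem x.2; omega

/-- The Grundy value: the mex of the Grundy values of the options. -/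
noncomputable def grundy : Game → ℕ
  | node l => sInf {n : ℕ | ∀ x : {a // a ∈ l}, grundy x.1 ≠ n}
decreasing_by
  simp_wf; have := List.sizeOf_lt_of_mem x.2; omega

/-- The height of a game: the maximal number of moves in a play from it. -/
def height : Game → ℕ
  | node l => (l.attach.map fun x => height x.1 + 1).foldr max 0
decreasing_by
  simp_wf; have := List.sizeOf_lt_of_mem x.2; omega

/-- A canonical tree: duplicate options are removed, hereditarily. -/
def Canonical : Game → Prop
  | node l => l.Nodup ∧ ∀ x : {a // a ∈ l}, Canonical x.1
decreasing_by
  simp_wf; have := List.sizeOf_lt_of_mem x.2; omega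

/-- Extensional (set-theoretic) equality of game trees. -/
def ExtEq : Game → Game → Prop
  | node l, node r =>
      (∀ x : {a // a ∈ l}, ∃ y : {b // b ∈ r}, ExtEq x.1 y.1) ∧
      (∀ y : {b // b ∈ r}, ∃ x : {a // a ∈ l}, ExtEq x.1 y.1)
termination_by g _ => sizeOf g
decreasing_by
  · have := List.sizeOf_lt_of_mem x.2; simp_wf; (try simp only [Game.node.sizeOf_spec] at *); omega
  · have := List.sizeOf_lt_of_mem x.2; simp_wf; (try simp only [Game.node.sizeOf_spec] at *); omega

/-- The disjunctive sum of `n` copies of a game. -/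
def copies : ℕ → Game → Game
  | 0, _ => node []
  | n + 1, g => add g (copies n g)

/-- `G` is a reducer of `H` if `H` is obtained from `G` by adding reversible
moves `R₁, R₂, …`: the options of `H` are those of `G` together with the `Rⱼ`,
each `Rⱼ` having `G` among its options; when `G` is empty one additionally
requires `H` to be a misère win. -/
def Reducer (G H : Game) : Prop :=
  ∃ Rs : List Game,
    (∀ x, x ∈ H.options ↔ x ∈ G.options ∨ x ∈ Rs) ∧
    (∀ R ∈ Rs, G ∈ R.options) ∧
    (G.options = [] → MisereWin H)

/-- A canonical tree is reduced if its only reducer is itself (as a set of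
options) and all of its options are reduced. -/
def Reduced : Game → Prop
  | node l =>
      (∀ G, Reducer G (node l) → ∀ x, x ∈ G.options ↔ x ∈ l) ∧
      ∀ x : {a // a ∈ l}, Reduced x.1
decreasing_by
  simp_wf; have := List.sizeOf_lt_of_mem x.2; omega

end Game

namespace Game

theorem strongInd {motive : Game → Prop}
    (h : ∀ l : List Game, (∀ x ∈ l, motive x) → motive (node l)) : ∀ g, motive g
  | node l => h l fun x hx => strongInd h x
decreasing_by simp_wf; have := List.sizeOf_lt_of_mem hx; omega

theorem options_node (l : List Game) : (node l).options = l := rfl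

theorem misereWin_iff (l : List Game) :
    MisereWin (node l) ↔ l = [] ∨ ∃ x ∈ l, ¬ MisereWin x := by
  rw [MisereWin]
  simp

theorem misereWin_add_iff (G H : Game) :
    MisereWin (add G H) ↔
      (G.options = [] ∧ H.options = []) ∨
      (∃ x ∈ G.options, ¬ MisereWin (add x H)) ∨
      (∃ y ∈ H.options, ¬ MisereWin (add G y)) := by
  cases G with | node l =>
  cases H with | node r =>
  rw [add, misereWin_iff]
  simp [options, List.append_eq_nil_iff, or_assoc]
  constructor
  · rintro (h | ⟨x, (⟨a, ha, rfl⟩ | ⟨a, ha, rfl⟩), hw⟩)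
    · exact Or.inl h
    · exact Or.inr (Or.inl ⟨a, ha, hw⟩)
    · exact Or.inr (Or.inr ⟨a, ha, hw⟩)
  · rintro (h | ⟨a, ha, hw⟩ | ⟨a, ha, hw⟩)
    · exact Or.inl h
    · exact Or.inr ⟨_, Or.inl ⟨a, ha, rfl⟩, hw⟩
    · exact Or.inr ⟨_, Or.inr ⟨a, ha, rfl⟩, hw⟩

theorem mem_options_nim {n : ℕ} {x : Game} : x ∈ (nim n).options ↔ ∃ k < n, x = nim k := by
  induction n with
  | zero => simp [nim, options]
  | succ n ih =>
    rw [nim]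
    simp only [options_node, List.mem_append, List.mem_singleton, ih]
    constructor
    · rintro (⟨k, hk, rfl⟩ | rfl)
      · exact ⟨k, by omega, rfl⟩
      · exact ⟨n, by omega, rfl⟩
    · rintro ⟨k, hk, rfl⟩
      rcases Nat.lt_succ_iff_lt_or_eq.mp hk with h | rfl
      · exact Or.inl ⟨k, h, rfl⟩
      · exact Or.inr rfl

theorem nim_options_ne_nil {n : ℕ} (h : n ≠ 0) : (nim n).options ≠ [] := by
  obtain ⟨k, rfl⟩ := Nat.exists_eq_succ_of_ne_zero h
  rw [nim, options_node]
  simp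

theorem not_win_nim1 : ¬ MisereWin (add (nim 1) (node [])) := by
  rw [misereWin_add_iff]
  rintro (⟨h1, -⟩ | ⟨x, hx, hw⟩ | ⟨y, hy, -⟩)
  · exact nim_options_ne_nil one_ne_zero h1
  · obtain ⟨k, hk, rfl⟩ := mem_options_nim.mp hx
    have hk0 : k = 0 := by omega
    subst hk0
    apply hw
    rw [misereWin_add_iff]
    exact Or.inl ⟨by simp [nim, options_node], rfl⟩
  · simp [options_node] at hy

theorem indist_replace (P : Game) (a : Game → ℕ)
    (ha : ∀ x ∈ P.options, Indist x (nim (a x))) :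
    Indist P (node (P.options.map fun x => nim (a x))) := by
  intro T
  induction T using strongInd with
  | h r ih =>
    rw [misereWin_add_iff, misereWin_add_iff]
    apply or_congr
    · simp [options_node]
    apply or_congr
    · simp only [options_node, List.mem_map]
      constructor
      · rintro ⟨x, hx, hw⟩
        exact ⟨_, ⟨x, hx, rfl⟩, fun h => hw ((ha x hx (node r)).mpr h)⟩
      · rintro ⟨_, ⟨x, hx, rfl⟩, hw⟩
        exact ⟨x, hx, fun h => hw ((ha x hx (node r)).mp h)⟩
    · simp only [options_node]
      constructor
      · rintro ⟨t, ht, hw⟩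
        exact ⟨t, ht, fun h => hw ((ih t ht).mpr h)⟩
      · rintro ⟨t, ht, hw⟩
        exact ⟨t, ht, fun h => hw ((ih t ht).mp h)⟩

theorem le_foldr_max (L : List ℕ) : ∀ k ∈ L, k ≤ L.foldr max 0 := by
  induction L with
  | nil => simp
  | cons a t ih =>
    intro k hk
    rcases List.mem_cons.mp hk with rfl | hk
    · exact le_max_left _ _
    · exact le_trans (ih k hk) (le_max_right _ _)

theorem indist_nim_list (L : List ℕ) (hL : L ≠ [])
    (h01 : ∃ k ∈ L, k = 0 ∨ k = 1) :
    Indist (node (L.map nim)) (nim (sInf {n | ∀ k ∈ L, k ≠ n})) := by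
  set m := sInf {n | ∀ k ∈ L, k ≠ n} with hmdef
  have hSne : {n | ∀ k ∈ L, k ≠ n}.Nonempty :=
    ⟨(L.foldr max 0) + 1, fun k hk => by have := le_foldr_max L k hk; omega⟩
  have hmem : ∀ k ∈ L, k ≠ m := Nat.sInf_mem hSne
  have hlt : ∀ j, j < m → j ∈ L := by
    intro j hj
    by_contra hjL
    have hjS : j ∈ {n | ∀ k ∈ L, k ≠ n} := by
      intro k hk hkj
      exact hjL (hkj ▸ hk)
    exact absurd (Nat.sInf_le hjS) (not_le.mpr hj)
  intro T
  induction T using strongInd with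
  | h r ih =>
    constructor
    · intro h
      rw [misereWin_add_iff] at h
      rcases h with ⟨h1, -⟩ | ⟨x, hx, hw⟩ | ⟨t, ht, hw⟩
      · rw [options_node, List.map_eq_nil_iff] at h1
        exact absurd h1 hL
      · rw [options_node, List.mem_map] at hx
        obtain ⟨k, hk, rfl⟩ := hx
        rcases lt_or_gt_of_ne (hmem k hk) with hkm | hkm
        · rw [misereWin_add_iff]
          exact Or.inr (Or.inl ⟨nim k, mem_options_nim.mpr ⟨k, hkm, rfl⟩, hw⟩)
        · rw [misereWin_add_iff] at hw
          push_neg at hw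
          exact hw.2.1 (nim m) (mem_options_nim.mpr ⟨m, hkm, rfl⟩)
      · rw [misereWin_add_iff]
        exact Or.inr (Or.inr ⟨t, ht, fun h => hw ((ih t ht).mpr h)⟩)
    · intro h
      rw [misereWin_add_iff] at h
      rcases h with ⟨h1, h2⟩ | ⟨x, hx, hw⟩ | ⟨t, ht, hw⟩
      · have hm0 : m = 0 := by
          by_contra hm
          exact nim_options_ne_nil hm h1
        have h1L : (1 : ℕ) ∈ L := by
          obtain ⟨k, hk, hk01⟩ := h01
          rcases hk01 with rfl | rfl
          · exact absurd hm0.symm (hmem 0 hk)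
          · exact hk
        cases r with
        | nil =>
          rw [misereWin_add_iff]
          refine Or.inr (Or.inl ⟨nim 1, ?_, not_win_nim1⟩)
          rw [options_node, List.mem_map]
          exact ⟨1, h1L, rfl⟩
        | cons a t => simp [options_node] at h2
      · obtain ⟨j, hj, rfl⟩ := mem_options_nim.mp hx
        rw [misereWin_add_iff]
        refine Or.inr (Or.inl ⟨nim j, ?_, hw⟩)
        rw [options_node, List.mem_map]
        exact ⟨j, hlt j hj, rfl⟩
      · rw [misereWin_add_iff]
        exact Or.inr (Or.inr ⟨t, ht, fun h => hw ((ih t ht).mp h)⟩)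

end Game

open Game in
/-- If `P` is nonempty and each option of `P` is
misère-indistinguishable from a Nim-heap `nim (a x)`, and some `a x` is `0`
or `1`, then `P` is misère-indistinguishable from `nim m` where `m` is the
mex (least excluded value) of the numbers `a x`. -/
theorem stmt2 (P : Game) (hne : P.options ≠ [])
    (a : Game → ℕ)
    (ha : ∀ x ∈ P.options, Indist x (nim (a x)))
    (h01 : ∃ x ∈ P.options, a x = 0 ∨ a x = 1) :
    Indist P (nim (sInf {n : ℕ | ∀ x ∈ P.options, a x ≠ n})) := by
  have h1 := indist_replace P a ha
  have h2 := indist_nim_list (P.options.map a)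
      (by simpa using hne)
      (by obtain ⟨x, hx, h⟩ := h01; exact ⟨a x, List.mem_map.mpr ⟨x, hx, rfl⟩, h⟩)
  have hset : {n : ℕ | ∀ k ∈ P.options.map a, k ≠ n} = {n : ℕ | ∀ x ∈ P.options, a x ≠ n} := by
    ext n
    simp [List.mem_map]
  have hmap : (P.options.map a).map nim = P.options.map fun x => nim (a x) := by
    rw [List.map_map]
    rfl
  rw [hset, hmap] at h2
  exact fun T => (h1 T).trans (h2 T)
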